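/- For fixed q ∈ ℕ and m = (m1, m2) ∈ ℕ², one has the identity Σ_{(a1,a2): 1 ≤ a1,a2 ≤ q, gcd(a1,a2,q)=1} V(q,a1,a2)^3 e(−(a1 m1 + a2 m2)/q) = q · Σ_{1 ≤ a ≤ q, gcd(a,q)=1} G_{m1}(q,a) e(−a m2/q), where V(q,a1,a2) = Σ_{r=1}^q e((a2 r² + a1 r)/q) and G_{m1}(q,a) = Σ_{1 ≤ r1,r2 ≤ q} e(a(2r1² + 2r1r2 + 2r2² − 2m1(r1+r2) + m1²)/q). -/

import Mathlib

open Finset Complex ArithmeticFunction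
open scoped ArithmeticFunction.Moebius

noncomputable def ee (q : ℕ) (n : ℤ) : ℂ :=
  Complex.exp (2 * Real.pi * Complex.I * ((n : ℂ) / (q : ℂ)))

lemma ee_add (q : ℕ) (m n : ℤ) : ee q (m + n) = ee q m * ee q n := by
  rw [ee, ee, ee, ← Complex.exp_add]
  congr 1
  push_cast
  ring

lemma ee_eq_one_iff (q : ℕ) (hq : 0 < q) (n : ℤ) : ee q n = 1 ↔ (q : ℤ) ∣ n := by
  rw [ee, Complex.exp_eq_one_iff]
  constructor
  · rintro ⟨k, hk⟩
    refine ⟨k, ?_⟩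
    have hq' : (q : ℂ) ≠ 0 := by exact_mod_cast hq.ne'
    have hpi : (2 * Real.pi * Complex.I : ℂ) ≠ 0 := by
      simp [Real.pi_ne_zero, Complex.I_ne_zero]
    field_simp at hk
    have : (n : ℂ) = (q : ℂ) * (k : ℂ) := by
      apply mul_left_cancel₀ hpi
      rw [hk]
    exact_mod_cast this
  · rintro ⟨k, hk⟩
    refine ⟨k, ?_⟩
    have hq' : (q : ℂ) ≠ 0 := by exact_mod_cast hq.ne'
    rw [hk]
    push_cast
    field_simp

lemma ee_pow (q : ℕ) (n : ℤ) (k : ℕ) : ee q n ^ k = ee q (k * n) := by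
  induction k with
  | zero => simp [ee]
  | succ k ih =>
    rw [pow_succ, ih, ← ee_add]
    congr 1
    push_cast
    ring

lemma geom_Icc (m : ℕ) (z : ℂ) (hz : z ^ m = 1) :
    ∑ b ∈ Finset.Icc 1 m, z ^ b = if z = 1 then (m : ℂ) else 0 := by
  split_ifs with h
  · subst h; simp
  · rw [← Finset.Ico_add_one_right_eq_Icc, Finset.sum_Ico_eq_sum_range]
    have : ∀ i, z ^ (1 + i) = z * z ^ i := fun i => by rw [pow_add, pow_one]
    rw [Finset.sum_congr rfl (fun i _ => this i), ← Finset.mul_sum,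
      geom_sum_eq h]
    simp [Nat.succ_sub_one, hz]
lemma sum_ee (q : ℕ) (hq : 0 < q) (w : ℤ) :
    ∑ a ∈ Finset.Icc 1 q, ee q (a * w) = if (q : ℤ) ∣ w then (q : ℂ) else 0 := by
  have h1 : ∀ a : ℕ, ee q (a * w) = ee q w ^ a := fun a => (ee_pow q w a).symm
  rw [Finset.sum_congr rfl (fun a _ => h1 a), geom_Icc q _ (by
    rw [ee_pow, ee_eq_one_iff q hq]; exact ⟨w, by push_cast; ring⟩)]
  simp only [ee_eq_one_iff q hq]

lemma sum_ee_dvd (q : ℕ) (hq : 0 < q) (d : ℕ) (hd : d ∣ q) (hd0 : 0 < d) (w : ℤ) :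
    ∑ a ∈ (Finset.Icc 1 q).filter (fun a => d ∣ a), ee q (a * w) =
      if ((q / d : ℕ) : ℤ) ∣ w then ((q / d : ℕ) : ℂ) else 0 := by
  have key : ∑ a ∈ (Finset.Icc 1 q).filter (fun a => d ∣ a), ee q (a * w) =
      ∑ b ∈ Finset.Icc 1 (q / d), ee q ((d * b : ℕ) * w) := by
    refine Finset.sum_nbij' (fun a => a / d) (fun b => d * b) ?_ ?_ ?_ ?_ ?_
    · intro a ha
      simp only [Finset.mem_filter, Finset.mem_Icc] at ha ⊢
      obtain ⟨⟨h1, h2⟩, h3⟩ := ha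
      exact ⟨Nat.one_le_div_iff hd0 |>.2 (Nat.le_of_dvd (by omega) h3),
        Nat.div_le_div_right h2⟩
    · intro b hb
      simp only [Finset.mem_filter, Finset.mem_Icc] at hb ⊢
      refine ⟨⟨by nlinarith [hb.1], ?_⟩, Dvd.intro b rfl⟩
      calc d * b ≤ d * (q / d) := Nat.mul_le_mul_left d hb.2
      _ = q := Nat.mul_div_cancel' hd
    · intro a ha
      simp only [Finset.mem_filter] at ha
      exact Nat.mul_div_cancel' ha.2
    · intro b hb
      exact Nat.mul_div_cancel_left b hd0
    · intro a ha
      simp only [Finset.mem_filter] at ha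
      rw [Nat.mul_div_cancel' ha.2]
  rw [key]
  have h1 : ∀ b : ℕ, ee q ((d * b : ℕ) * w) = ee q ((d : ℤ) * w) ^ b := by
    intro b; rw [ee_pow]; congr 1; push_cast; ring
  rw [Finset.sum_congr rfl (fun b _ => h1 b), geom_Icc (q / d) _ (by
    rw [ee_pow, ee_eq_one_iff q hq]
    exact ⟨w, by rw [← mul_assoc]; norm_cast; rw [Nat.div_mul_cancel hd]⟩)]
  simp only [ee_eq_one_iff q hq]
  have hiff : ((q : ℤ) ∣ (d : ℤ) * w) ↔ (((q / d : ℕ) : ℤ) ∣ w) := by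
    constructor
    · rintro ⟨k, hk⟩
      refine ⟨k, ?_⟩
      have hdq : (q : ℤ) = (d : ℤ) * ((q / d : ℕ) : ℤ) := by
        norm_cast; rw [Nat.mul_div_cancel' hd]
      rw [hdq] at hk
      have hd0' : (d : ℤ) ≠ 0 := by exact_mod_cast hd0.ne'
      exact mul_left_cancel₀ hd0' (by linarith [hk])
    · rintro ⟨k, hk⟩
      exact ⟨k, by rw [hk, ← mul_assoc]; norm_cast; rw [Nat.mul_div_cancel' hd]⟩
  simp only [hiff]
-- Möbius indicator
lemma moebius_ind (q : ℕ) (hq : 0 < q) (a : ℕ) (ha : 0 < a) :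
    (if Nat.gcd a q = 1 then (1 : ℂ) else 0) =
      ∑ d ∈ q.divisors.filter (fun d => d ∣ a), (μ d : ℂ) := by
  have h0 : Nat.gcd a q ≠ 0 := Nat.gcd_ne_zero_right hq.ne'
  have hdiv : (Nat.gcd a q).divisors = q.divisors.filter (fun d => d ∣ a) := by
    ext d
    simp only [Nat.mem_divisors, Finset.mem_filter]
    constructor
    · rintro ⟨hd, _⟩
      exact ⟨⟨hd.trans (Nat.gcd_dvd_right a q), hq.ne'⟩, hd.trans (Nat.gcd_dvd_left a q)⟩
    · rintro ⟨⟨hdq, _⟩, hda⟩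
      exact ⟨Nat.dvd_gcd hda hdq, h0⟩
  rw [← hdiv]
  have := congrArg (fun f => f (Nat.gcd a q)) ArithmeticFunction.moebius_mul_coe_zeta
  simp only [ArithmeticFunction.coe_mul_zeta_apply, ArithmeticFunction.one_apply] at this
  rw [show (∑ d ∈ (Nat.gcd a q).divisors, (μ d : ℂ)) =
      ((∑ d ∈ (Nat.gcd a q).divisors, μ d : ℤ) : ℂ) by push_cast; rfl, this]
  split_ifs <;> simp

lemma keyB (q : ℕ) (hq : 0 < q) (w : ℤ) :
    ∑ a ∈ (Finset.Icc 1 q).filter (fun a => Nat.gcd a q = 1), ee q (a * w)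
      = ∑ d ∈ q.divisors, (μ d : ℂ) *
          (if ((q / d : ℕ) : ℤ) ∣ w then ((q / d : ℕ) : ℂ) else 0) := by
  rw [Finset.sum_filter]
  have step1 : ∀ a ∈ Finset.Icc 1 q,
      (if Nat.gcd a q = 1 then ee q (a * w) else 0) =
        ∑ d ∈ q.divisors, (if d ∣ a then (μ d : ℂ) else 0) * ee q (a * w) := by
    intro a ha
    rw [Finset.mem_Icc] at ha
    have := moebius_ind q hq a (by omega)
    rw [Finset.sum_filter] at this
    rw [show (if Nat.gcd a q = 1 then ee q (a * w) else 0) =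
        (if Nat.gcd a q = 1 then (1:ℂ) else 0) * ee q (a * w) by split_ifs <;> simp,
      this, Finset.sum_mul]
  rw [Finset.sum_congr rfl step1, Finset.sum_comm]
  refine Finset.sum_congr rfl (fun d hd => ?_)
  rw [Nat.mem_divisors] at hd
  have hd0 : 0 < d := Nat.pos_of_mem_divisors (Nat.mem_divisors.2 hd)
  rw [← sum_ee_dvd q hq d hd.1 hd0 w, Finset.sum_filter, Finset.mul_sum]
  refine Finset.sum_congr rfl (fun a _ => ?_)
  split_ifs <;> simp

lemma keyA (q : ℕ) (hq : 0 < q) (v u : ℤ) :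
    ∑ p ∈ (Finset.Icc 1 q ×ˢ Finset.Icc 1 q).filter
        (fun p => Nat.gcd p.1 (Nat.gcd p.2 q) = 1), ee q (p.1 * v + p.2 * u)
      = ∑ d ∈ q.divisors, (μ d : ℂ) *
          ((if ((q / d : ℕ) : ℤ) ∣ v then ((q / d : ℕ) : ℂ) else 0) *
           (if ((q / d : ℕ) : ℤ) ∣ u then ((q / d : ℕ) : ℂ) else 0)) := by
  rw [Finset.sum_filter, Finset.sum_product]
  have step1 : ∀ a1 ∈ Finset.Icc 1 q, ∀ a2 ∈ Finset.Icc 1 q,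
      (if Nat.gcd a1 (Nat.gcd a2 q) = 1 then ee q (a1 * v + a2 * u) else 0) =
        ∑ d ∈ q.divisors, (if d ∣ a1 then (1:ℂ) else 0) * (if d ∣ a2 then (1:ℂ) else 0)
          * (μ d : ℂ) * (ee q (a1 * v) * ee q (a2 * u)) := by
    intro a1 ha1 a2 ha2
    rw [Finset.mem_Icc] at ha1 ha2
    have hg : Nat.gcd a1 (Nat.gcd a2 q) = Nat.gcd (Nat.gcd a1 a2) q := (Nat.gcd_assoc _ _ _).symm
    have := moebius_ind q hq (Nat.gcd a1 a2) (Nat.pos_of_ne_zero (fun h => by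
      have := Nat.eq_zero_of_gcd_eq_zero_left h; omega))
    rw [Finset.sum_filter] at this
    simp only [hg]
    rw [show (if Nat.gcd (Nat.gcd a1 a2) q = 1 then ee q (a1 * v + a2 * u) else 0) =
        (if Nat.gcd (Nat.gcd a1 a2) q = 1 then (1:ℂ) else 0) * ee q (a1 * v + a2 * u)
        by split_ifs <;> simp, this, Finset.sum_mul]
    refine Finset.sum_congr rfl (fun d _ => ?_)
    rw [ee_add]
    have : (d ∣ Nat.gcd a1 a2) ↔ (d ∣ a1 ∧ d ∣ a2) := Nat.dvd_gcd_iff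
    simp only [this]
    split_ifs with h1 h2 h3 h4 h5 <;> simp_all <;> ring
  rw [Finset.sum_congr rfl (fun a1 h1 => Finset.sum_congr rfl (fun a2 h2 => step1 a1 h1 a2 h2))]
  rw [Finset.sum_congr rfl (fun a1 _ => Finset.sum_comm), Finset.sum_comm]
  refine Finset.sum_congr rfl (fun d hd => ?_)
  rw [Nat.mem_divisors] at hd
  have hd0 : 0 < d := Nat.pos_of_mem_divisors (Nat.mem_divisors.2 hd)
  rw [← sum_ee_dvd q hq d hd.1 hd0 v, ← sum_ee_dvd q hq d hd.1 hd0 u,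
    Finset.sum_filter, Finset.sum_filter, Finset.sum_mul_sum, Finset.mul_sum]
  refine Finset.sum_congr rfl (fun a1 _ => ?_)
  rw [Finset.mul_sum]
  refine Finset.sum_congr rfl (fun a2 _ => ?_)
  split_ifs <;> simp <;> ring
lemma sum_Icc_periodic (n d : ℕ) (g : ℕ → ℂ) (hg : ∀ r, g (r + n) = g r) :
    ∑ r ∈ Finset.Icc 1 (d * n), g r = d * ∑ r ∈ Finset.Icc 1 n, g r := by
  have hIcc : ∀ m : ℕ, Finset.Icc 1 m = Finset.Ioc 0 m := by
    intro m; ext x; simp only [Finset.mem_Icc, Finset.mem_Ioc]; omega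
  have hper : ∀ k r, g (k * n + r) = g r := by
    intro k
    induction k with
    | zero => simp
    | succ j ih =>
      intro r
      have : (j + 1) * n + r = (j * n + r) + n := by ring
      rw [this, hg, ih]
  rw [hIcc, hIcc]
  induction d with
  | zero => simp
  | succ k ih =>
    have h1 : k * n ≤ (k + 1) * n := by nlinarith
    rw [show (k+1) * n = (k+1)*n from rfl,
      ← Finset.sum_Ioc_consecutive g (Nat.zero_le (k * n)) h1, ih]
    have h2 : ∑ r ∈ Finset.Ioc (k * n) ((k + 1) * n), g r = ∑ r ∈ Finset.Ioc 0 n, g r := by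
      have hmap : Finset.Ioc (k * n) ((k + 1) * n) =
          Finset.map (addLeftEmbedding (k * n)) (Finset.Ioc 0 n) := by
        rw [Finset.map_add_left_Ioc]
        congr 1 <;> ring
      rw [hmap, Finset.sum_map]
      refine Finset.sum_congr rfl (fun r _ => ?_)
      simp only [addLeftEmbedding_apply]
      exact hper k r
    rw [h2]
    push_cast
    ring

lemma sum_Icc_zmod (n : ℕ) [NeZero n] (G : ZMod n → ℂ) :
    ∑ r ∈ Finset.Icc 1 n, G ((r : ℕ) : ZMod n) = ∑ x : ZMod n, G x := by
  have hn : 0 < n := Nat.pos_of_ne_zero (NeZero.ne n)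
  refine Finset.sum_nbij' (fun r => ((r : ℕ) : ZMod n))
    (fun x => if x = 0 then n else x.val) ?_ ?_ ?_ ?_ ?_
  · intro r _; exact Finset.mem_univ _
  · intro x _
    simp only [Finset.mem_Icc]
    split_ifs with h
    · omega
    · refine ⟨Nat.pos_of_ne_zero (fun hv => h ?_), (ZMod.val_lt x).le⟩
      rwa [← ZMod.val_eq_zero]
  · intro r hr
    simp only [Finset.mem_Icc] at hr
    split_ifs with h
    · -- (r : ZMod n) = 0 → n ∣ r → r = n
      have hdvd : n ∣ r := (ZMod.natCast_eq_zero_iff r n).1 h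
      have : r = n := Nat.le_antisymm hr.2 (Nat.le_of_dvd (by omega) hdvd)
      omega
    · rw [ZMod.val_natCast]
      have : r ≠ n := fun hrn => h (by rw [hrn]; exact ZMod.natCast_self n)
      rw [Nat.mod_eq_of_lt (by omega)]
  · intro x _
    split_ifs with h
    · rw [ZMod.natCast_self]; exact h.symm
    · exact ZMod.natCast_rightInverse x
  · intro r _; rfl
lemma keyC (q d : ℕ) (hq : 0 < q) (hd : d ∣ q) (hd0 : 0 < d) (c t : ℤ) :
    ∑ r ∈ Finset.Icc 1 q,
      ((if ((q / d : ℕ) : ℤ) ∣ ((r : ℤ) - c) then (1 : ℂ) else 0) *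
       (if ((q / d : ℕ) : ℤ) ∣ ((r : ℤ) ^ 2 + t) then (1 : ℂ) else 0)) =
    (d : ℂ) * (if ((q / d : ℕ) : ℤ) ∣ (c ^ 2 + t) then (1 : ℂ) else 0) := by
  set n := q / d with hn
  have hq' : q = d * n := (Nat.mul_div_cancel' hd).symm
  have hn0 : 0 < n := Nat.div_pos (Nat.le_of_dvd hq hd) hd0
  haveI : NeZero n := ⟨hn0.ne'⟩
  set g : ℕ → ℂ := fun r =>
    (if ((n : ℕ) : ℤ) ∣ ((r : ℤ) - c) then (1 : ℂ) else 0) *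
    (if ((n : ℕ) : ℤ) ∣ ((r : ℤ) ^ 2 + t) then (1 : ℂ) else 0) with hgdef
  have hper : ∀ r, g (r + n) = g r := by
    intro r
    simp only [hgdef]
    have e1 : (((r + n : ℕ)) : ℤ) - c = ((r : ℤ) - c) + n := by push_cast; ring
    have e2 : (((r + n : ℕ)) : ℤ) ^ 2 + t = ((r : ℤ) ^ 2 + t) + n * (2 * r + n) := by
      push_cast; ring
    rw [e1, e2]
    have i1 : ((n:ℤ) ∣ ((r : ℤ) - c) + n) ↔ ((n:ℤ) ∣ (r : ℤ) - c) := by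
      constructor
      · intro h; simpa using Int.dvd_sub h (dvd_refl (n:ℤ))
      · intro h; exact dvd_add h (dvd_refl _)
    have i2 : ((n:ℤ) ∣ ((r : ℤ) ^ 2 + t) + n * (2 * r + n)) ↔ ((n:ℤ) ∣ (r : ℤ) ^ 2 + t) := by
      constructor
      · intro h
        have h' := Int.dvd_sub h (Dvd.intro (2 * (r:ℤ) + n) rfl)
        simpa using h'
      · intro h; exact dvd_add h (Dvd.intro _ rfl)
    simp only [i1, i2]
  calc ∑ r ∈ Finset.Icc 1 q, g r = ∑ r ∈ Finset.Icc 1 (d * n), g r := by rw [← hq']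
    _ = (d : ℂ) * ∑ r ∈ Finset.Icc 1 n, g r := sum_Icc_periodic n d g hper
    _ = (d : ℂ) * (if ((n : ℕ) : ℤ) ∣ (c ^ 2 + t) then (1 : ℂ) else 0) := by
        congr 1
        set G : ZMod n → ℂ := fun x =>
          if x = (c : ZMod n) then (if x ^ 2 + (t : ZMod n) = 0 then (1:ℂ) else 0) else 0
          with hG
        have hgG : ∀ r ∈ Finset.Icc 1 n, g r = G ((r : ℕ) : ZMod n) := by
          intro r _
          simp only [hgdef, hG]
          have h1 : (((n : ℕ) : ℤ) ∣ ((r : ℤ) - c)) ↔ (((r : ℕ) : ZMod n) = (c : ZMod n)) := by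
            rw [← ZMod.intCast_zmod_eq_zero_iff_dvd, Int.cast_sub, sub_eq_zero]
            push_cast
            rfl
          have h2 : (((n : ℕ) : ℤ) ∣ ((r : ℤ) ^ 2 + t)) ↔
              ((((r : ℕ) : ZMod n)) ^ 2 + (t : ZMod n) = 0) := by
            rw [← ZMod.intCast_zmod_eq_zero_iff_dvd]
            push_cast
            rfl
          simp only [h1, h2]
          split_ifs <;> ring
        rw [Finset.sum_congr rfl hgG, sum_Icc_zmod n G, hG]
        rw [Finset.sum_ite_eq' Finset.univ ((c : ZMod n)) _]
        simp only [Finset.mem_univ, if_true]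
        have h3 : ((c : ZMod n) ^ 2 + (t : ZMod n) = 0) ↔ (((n:ℕ):ℤ) ∣ (c ^ 2 + t)) := by
          rw [← ZMod.intCast_zmod_eq_zero_iff_dvd]
          push_cast
          rfl
        simp only [h3]

lemma keyD (q : ℕ) (hq : 0 < q) (c t : ℤ) :
    ∑ r3 ∈ Finset.Icc 1 q, ∑ d ∈ q.divisors, (μ d : ℂ) *
        ((if ((q / d : ℕ) : ℤ) ∣ ((r3 : ℤ) - c) then ((q / d : ℕ) : ℂ) else 0) *
         (if ((q / d : ℕ) : ℤ) ∣ ((r3 : ℤ) ^ 2 + t) then ((q / d : ℕ) : ℂ) else 0)) =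
    (q : ℂ) * ∑ d ∈ q.divisors, (μ d : ℂ) *
        (if ((q / d : ℕ) : ℤ) ∣ (c ^ 2 + t) then ((q / d : ℕ) : ℂ) else 0) := by
  rw [Finset.sum_comm, Finset.mul_sum]
  refine Finset.sum_congr rfl (fun d hd => ?_)
  rw [Nat.mem_divisors] at hd
  have hd0 : 0 < d := Nat.pos_of_mem_divisors (Nat.mem_divisors.2 hd)
  have hC := keyC q d hq hd.1 hd0 c t
  have hsplit : ∀ r3 : ℕ, (μ d : ℂ) *
      ((if ((q / d : ℕ) : ℤ) ∣ ((r3 : ℤ) - c) then ((q / d : ℕ) : ℂ) else 0) *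
       (if ((q / d : ℕ) : ℤ) ∣ ((r3 : ℤ) ^ 2 + t) then ((q / d : ℕ) : ℂ) else 0)) =
      (μ d : ℂ) * ((q / d : ℕ) : ℂ) ^ 2 *
      ((if ((q / d : ℕ) : ℤ) ∣ ((r3 : ℤ) - c) then (1:ℂ) else 0) *
       (if ((q / d : ℕ) : ℤ) ∣ ((r3 : ℤ) ^ 2 + t) then (1:ℂ) else 0)) := by
    intro r3; split_ifs <;> ring
  rw [Finset.sum_congr rfl (fun r3 _ => hsplit r3), ← Finset.mul_sum, hC]
  have hqd : ((q / d : ℕ) : ℂ) * (d : ℂ) = (q : ℂ) := by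
    norm_cast; rw [Nat.div_mul_cancel hd.1]
  split_ifs <;> [skip; ring]
  calc (μ d : ℂ) * ((q / d : ℕ) : ℂ) ^ 2 * ((d : ℂ) * 1)
      = (μ d : ℂ) * ((q / d : ℕ) : ℂ) * (((q / d : ℕ) : ℂ) * (d : ℂ)) := by ring
    _ = (q : ℂ) * ((μ d : ℂ) * ((q / d : ℕ) : ℂ) * 1) := by rw [hqd]; ring
    _ = (q : ℂ) * ((μ d : ℂ) * ((q / d : ℕ) : ℂ)) := by ring

lemma cube_expand (s : Finset ℕ) (f : ℕ → ℂ) (Y : ℂ) :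
    (∑ r ∈ s, f r) ^ 3 * Y = ∑ r1 ∈ s, ∑ r2 ∈ s, ∑ r3 ∈ s, f r1 * f r2 * f r3 * Y := by
  have h3 : (∑ r ∈ s, f r) ^ 3 * Y =
      (∑ r ∈ s, f r) * ((∑ r ∈ s, f r) * ((∑ r ∈ s, f r) * Y)) := by ring
  rw [h3, Finset.sum_mul]
  refine Finset.sum_congr rfl (fun r1 _ => ?_)
  rw [show f r1 * ((∑ r ∈ s, f r) * ((∑ r ∈ s, f r) * Y)) =
    (∑ r ∈ s, f r) * ((∑ r ∈ s, f r) * (f r1 * Y)) by ring, Finset.sum_mul]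
  refine Finset.sum_congr rfl (fun r2 _ => ?_)
  rw [show f r2 * ((∑ r ∈ s, f r) * (f r1 * Y)) =
    (∑ r ∈ s, f r) * (f r2 * (f r1 * Y)) by ring, Finset.sum_mul]
  refine Finset.sum_congr rfl (fun r3 _ => ?_)
  ring

theorem stmt_8 (q : ℕ) (hq : 0 < q) (m1 m2 : ℕ) :
    ∑ a ∈ (Finset.Icc 1 q ×ˢ Finset.Icc 1 q).filter
        (fun a => Nat.gcd a.1 (Nat.gcd a.2 q) = 1),
      (∑ r ∈ Finset.Icc 1 q,
          Complex.exp (2 * Real.pi * Complex.I *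
            (((a.2 * r ^ 2 + a.1 * r : ℕ) : ℝ) / q))) ^ 3 *
        Complex.exp (-(2 * Real.pi * Complex.I) * (((a.1 * m1 + a.2 * m2 : ℕ) : ℝ) / q)) =
    (q : ℂ) * ∑ a ∈ (Finset.Icc 1 q).filter (fun a => Nat.gcd a q = 1),
      (∑ r1 ∈ Finset.Icc 1 q, ∑ r2 ∈ Finset.Icc 1 q,
          Complex.exp (2 * Real.pi * Complex.I *
            ((((a : ℤ) * (2 * r1 ^ 2 + 2 * r1 * r2 + 2 * r2 ^ 2
              - 2 * m1 * (r1 + r2) + (m1 : ℤ) ^ 2) : ℤ) : ℝ) / q))) *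
        Complex.exp (-(2 * Real.pi * Complex.I) * (((a * m2 : ℕ) : ℝ) / q)) := by
  have hexpN : ∀ N : ℕ, Complex.exp (2 * Real.pi * Complex.I * ((N : ℝ) / q))
      = ee q (N : ℤ) := by
    intro N; rw [ee]; congr 2 <;> push_cast <;> ring
  have hexpNeg : ∀ N : ℕ, Complex.exp (-(2 * Real.pi * Complex.I) * ((N : ℝ) / q))
      = ee q (-(N : ℤ)) := by
    intro N; rw [ee]; congr 1; push_cast; ring
  have hexpZ : ∀ z : ℤ, Complex.exp (2 * Real.pi * Complex.I * ((z : ℝ) / q))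
      = ee q z := by
    intro z; rw [ee]; congr 2 <;> push_cast <;> ring
  -- abbreviations
  set c : ℕ → ℕ → ℤ := fun r1 r2 => (m1 : ℤ) - r1 - r2 with hc
  set t : ℕ → ℕ → ℤ := fun r1 r2 => (r1 : ℤ) ^ 2 + (r2 : ℤ) ^ 2 - m2 with ht
  -- LHS transformation
  have hL : ∑ a ∈ (Finset.Icc 1 q ×ˢ Finset.Icc 1 q).filter
        (fun a => Nat.gcd a.1 (Nat.gcd a.2 q) = 1),
      (∑ r ∈ Finset.Icc 1 q,
          Complex.exp (2 * Real.pi * Complex.I *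
            (((a.2 * r ^ 2 + a.1 * r : ℕ) : ℝ) / q))) ^ 3 *
        Complex.exp (-(2 * Real.pi * Complex.I) * (((a.1 * m1 + a.2 * m2 : ℕ) : ℝ) / q))
      = ∑ r1 ∈ Finset.Icc 1 q, ∑ r2 ∈ Finset.Icc 1 q, ∑ r3 ∈ Finset.Icc 1 q,
          ∑ p ∈ (Finset.Icc 1 q ×ˢ Finset.Icc 1 q).filter
            (fun a => Nat.gcd a.1 (Nat.gcd a.2 q) = 1),
          ee q (p.1 * ((r3 : ℤ) - c r1 r2) + p.2 * ((r3 : ℤ) ^ 2 + t r1 r2)) := by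
    have step : ∀ p ∈ (Finset.Icc 1 q ×ˢ Finset.Icc 1 q).filter
          (fun a => Nat.gcd a.1 (Nat.gcd a.2 q) = 1),
        (∑ r ∈ Finset.Icc 1 q,
          Complex.exp (2 * Real.pi * Complex.I *
            (((p.2 * r ^ 2 + p.1 * r : ℕ) : ℝ) / q))) ^ 3 *
        Complex.exp (-(2 * Real.pi * Complex.I) * (((p.1 * m1 + p.2 * m2 : ℕ) : ℝ) / q))
        = ∑ r1 ∈ Finset.Icc 1 q, ∑ r2 ∈ Finset.Icc 1 q, ∑ r3 ∈ Finset.Icc 1 q,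
            ee q (p.1 * ((r3 : ℤ) - c r1 r2) + p.2 * ((r3 : ℤ) ^ 2 + t r1 r2)) := by
      intro p _
      rw [Finset.sum_congr rfl (fun r _ => hexpN _), hexpNeg, cube_expand]
      refine Finset.sum_congr rfl (fun r1 _ => ?_)
      refine Finset.sum_congr rfl (fun r2 _ => ?_)
      refine Finset.sum_congr rfl (fun r3 _ => ?_)
      rw [← ee_add, ← ee_add, ← ee_add]
      congr 1
      simp only [hc, ht]
      push_cast
      ring
    rw [Finset.sum_congr rfl step, Finset.sum_comm]
    refine Finset.sum_congr rfl (fun r1 _ => ?_)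
    rw [Finset.sum_comm]
    exact Finset.sum_congr rfl (fun r2 _ => Finset.sum_comm)
  -- RHS transformation
  have hR : (∑ a ∈ (Finset.Icc 1 q).filter (fun a => Nat.gcd a q = 1),
      (∑ r1 ∈ Finset.Icc 1 q, ∑ r2 ∈ Finset.Icc 1 q,
          Complex.exp (2 * Real.pi * Complex.I *
            ((((a : ℤ) * (2 * r1 ^ 2 + 2 * r1 * r2 + 2 * r2 ^ 2
              - 2 * m1 * (r1 + r2) + (m1 : ℤ) ^ 2) : ℤ) : ℝ) / q))) *
        Complex.exp (-(2 * Real.pi * Complex.I) * (((a * m2 : ℕ) : ℝ) / q)))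
      = ∑ r1 ∈ Finset.Icc 1 q, ∑ r2 ∈ Finset.Icc 1 q,
          ∑ a ∈ (Finset.Icc 1 q).filter (fun a => Nat.gcd a q = 1),
          ee q ((a : ℤ) * ((c r1 r2) ^ 2 + t r1 r2)) := by
    have step : ∀ a ∈ (Finset.Icc 1 q).filter (fun a => Nat.gcd a q = 1),
        (∑ r1 ∈ Finset.Icc 1 q, ∑ r2 ∈ Finset.Icc 1 q,
          Complex.exp (2 * Real.pi * Complex.I *
            ((((a : ℤ) * (2 * r1 ^ 2 + 2 * r1 * r2 + 2 * r2 ^ 2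
              - 2 * m1 * (r1 + r2) + (m1 : ℤ) ^ 2) : ℤ) : ℝ) / q))) *
        Complex.exp (-(2 * Real.pi * Complex.I) * (((a * m2 : ℕ) : ℝ) / q))
        = ∑ r1 ∈ Finset.Icc 1 q, ∑ r2 ∈ Finset.Icc 1 q,
            ee q ((a : ℤ) * ((c r1 r2) ^ 2 + t r1 r2)) := by
      intro a _
      rw [Finset.sum_congr rfl (fun r1 _ => Finset.sum_congr rfl (fun r2 _ => hexpZ _)),
        hexpNeg, Finset.sum_mul]
      refine Finset.sum_congr rfl (fun r1 _ => ?_)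
      rw [Finset.sum_mul]
      refine Finset.sum_congr rfl (fun r2 _ => ?_)
      rw [← ee_add]
      congr 1
      simp only [hc, ht]
      push_cast
      ring
    rw [Finset.sum_congr rfl step, Finset.sum_comm]
    exact Finset.sum_congr rfl (fun r1 _ => Finset.sum_comm)
  rw [hL, hR, Finset.mul_sum]
  refine Finset.sum_congr rfl (fun r1 _ => ?_)
  rw [Finset.mul_sum]
  refine Finset.sum_congr rfl (fun r2 _ => ?_)
  -- apply keyA pointwise in r3, then keyD, then keyB backwards
  have hA : ∀ r3 : ℕ, ∑ p ∈ (Finset.Icc 1 q ×ˢ Finset.Icc 1 q).filter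
        (fun a => Nat.gcd a.1 (Nat.gcd a.2 q) = 1),
      ee q (p.1 * ((r3 : ℤ) - c r1 r2) + p.2 * ((r3 : ℤ) ^ 2 + t r1 r2))
      = ∑ d ∈ q.divisors, (μ d : ℂ) *
          ((if ((q / d : ℕ) : ℤ) ∣ ((r3 : ℤ) - c r1 r2) then ((q / d : ℕ) : ℂ) else 0) *
           (if ((q / d : ℕ) : ℤ) ∣ ((r3 : ℤ) ^ 2 + t r1 r2) then ((q / d : ℕ) : ℂ) else 0)) :=
    fun r3 => keyA q hq _ _
  rw [Finset.sum_congr rfl (fun r3 _ => hA r3), keyD q hq (c r1 r2) (t r1 r2),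
    keyB q hq ((c r1 r2) ^ 2 + t r1 r2)]
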